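/- (Lemma 3) For every k ∈ {1,…,p}, the number of polygonal lines in F_p with exactly k segments satisfies ln |{f ∈ F_p : K(f) = k}| ≤ (ln(8p·e·V_d) + 3d^{3/2} − d)·k + ((ln 2)/(δ√d) + d/δ)·L + d·ln(√d(2R+δ)/δ), where V_d denotes the volume of the unit Euclidean ball in ℝ^d; that is, ln |{f ∈ F_p : K(f) = k}| ≤ c₁k + c₂L + c₃ with c₁ = ln(8p·e·V_d) + 3d^{3/2} − d, c₂ = (ln 2)/(δ√d) + d/δ, c₃ = d·ln(√d(2R+δ)/δ). -/

import Mathlib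

open MeasureTheory ProbabilityTheory Real

noncomputable section

namespace SLPC

/-- A polygonal line in `ℝ^d`, with `segs` segments and `segs + 1` vertices. -/
structure PolyLine (d : ℕ) where
  segs : ℕ
  vertices : Fin (segs + 1) → EuclideanSpace ℝ (Fin d)

instance (d : ℕ) : Inhabited (PolyLine d) := ⟨⟨0, fun _ => 0⟩⟩

/-- The image (trace) of a polygonal line: the union of its segments. -/
def PolyLine.image {d : ℕ} (f : PolyLine d) : Set (EuclideanSpace ℝ (Fin d)) :=
  ⋃ i : Fin f.segs, segment ℝ (f.vertices i.castSucc) (f.vertices i.succ)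

/-- The length of a polygonal line: the sum of the lengths of its segments. -/
def PolyLine.length {d : ℕ} (f : PolyLine d) : ℝ :=
  ∑ i : Fin f.segs, dist (f.vertices i.castSucc) (f.vertices i.succ)

/-- `Δ(f, x) = inf_s ‖f(s) - x‖²`: the squared distance from `x` to the polygonal line `f`. -/
def sqLoss {d : ℕ} (f : PolyLine d) (x : EuclideanSpace ℝ (Fin d)) : ℝ :=
  (Metric.infDist x f.image) ^ 2

/-- The grid `Q_δ = B(0, √d·R) ∩ δℤ^d`. -/
def Qgrid (d : ℕ) (R δ : ℝ) : Set (EuclideanSpace ℝ (Fin d)) :=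
  {x | x ∈ Metric.closedBall (0 : EuclideanSpace ℝ (Fin d)) (Real.sqrt d * R) ∧
        ∀ i : Fin d, ∃ n : ℤ, x i = n * δ}

/-- `F_{k,L}`: polygonal lines with `k` segments, vertices in `Q_δ`, and length at most `L`. -/
def Fclass (d : ℕ) (R δ L : ℝ) (k : ℕ) : Set (PolyLine d) :=
  {f | f.segs = k ∧ (∀ i, f.vertices i ∈ Qgrid d R δ) ∧ f.length ≤ L}

/-- `F_p = ⋃_{k=1}^p F_{k,L}`. -/
def Fp (d p : ℕ) (R δ L : ℝ) : Set (PolyLine d) :=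
  ⋃ k ∈ Finset.Icc 1 p, Fclass d R δ L k

/-- `c₀ = d(2R+δ)²`, a uniform bound on the loss. -/
def c0 (d : ℕ) (R δ : ℝ) : ℝ := d * (2 * R + δ) ^ 2

/-- Volume of the unit Euclidean ball of `ℝ^d`. -/
def unitBallVol (d : ℕ) : ℝ :=
  (MeasureTheory.volume (Metric.ball (0 : EuclideanSpace ℝ (Fin d)) 1)).toReal

/-- `c₁ = ln(8pe·V_d) + 3d^{3/2} - d`. -/
def c1 (d p : ℕ) : ℝ :=
  Real.log (8 * p * Real.exp 1 * unitBallVol d) + 3 * (d : ℝ) ^ ((3 : ℝ) / 2) - d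

/-- `c₂ = ln 2/(δ√d) + d/δ`. -/
def c2 (d : ℕ) (δ : ℝ) : ℝ := Real.log 2 / (δ * Real.sqrt d) + d / δ

/-- `c₃ = d·ln(√d(2R+δ)/δ)`. -/
def c3 (d : ℕ) (R δ : ℝ) : ℝ := d * Real.log (Real.sqrt d * (2 * R + δ) / δ)

/-- The standard exponential distribution on `ℝ` (density `e^{-z} 1_{z>0}`). -/
def expMeasure : Measure ℝ :=
  MeasureTheory.volume.withDensity fun z =>
    ENNReal.ofReal (if 0 < z then Real.exp (-z) else 0)



open Finset in
lemma zpow_sum_eq {α : Type*} (s : Finset α) (f : α → ℤ) :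
    (2:ℝ) ^ (∑ i ∈ s, f i) = ∏ i ∈ s, (2:ℝ)^(f i) := by
  classical
  induction s using Finset.induction with
  | empty => simp
  | insert _ _ h ih =>
    rw [Finset.sum_insert h, Finset.prod_insert h, zpow_add₀ (by norm_num : (2:ℝ) ≠ 0), ih]

lemma geom_abs_sum (M : ℕ) :
    ∑ c ∈ Finset.Icc (-(M:ℤ)) (M:ℤ), (2:ℝ)^(-|c|) ≤ 3 - 2*(2:ℝ)^(-(M:ℤ)) := by
  induction M with
  | zero => norm_num
  | succ M ih =>
    have h1 : Finset.Icc (-(M+1:ℕ):ℤ) ((M+1:ℕ):ℤ)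
        = insert (-(M+1:ℕ):ℤ) (insert ((M+1:ℕ):ℤ) (Finset.Icc (-(M:ℕ):ℤ) (M:ℤ))) := by
      ext c; simp only [Finset.mem_Icc, Finset.mem_insert]; push_cast; omega
    rw [h1, Finset.sum_insert (by simp only [Finset.mem_insert, Finset.mem_Icc]; push_cast; omega),
      Finset.sum_insert (by simp only [Finset.mem_Icc]; push_cast; omega)]
    have e1 : (-(|(-(M+1:ℕ):ℤ)|)) = -((M:ℤ)+1) := by
      rw [abs_neg, abs_of_nonneg (by positivity)]; push_cast; ring
    have e2 : (-(|((M+1:ℕ):ℤ)|)) = -((M:ℤ)+1) := by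
      rw [abs_of_nonneg (by positivity)]; push_cast; ring
    rw [e1, e2]
    have h2 : (2:ℝ) ^ (-((M:ℤ)+1)) = (2:ℝ)^(-(M:ℤ)) / 2 := by
      rw [neg_add, zpow_add₀ (by norm_num : (2:ℝ) ≠ 0)]
      norm_num; ring
    have h3 : (-((M+1:ℕ):ℤ)) = -((M:ℤ)+1) := by push_cast; ring
    rw [h2, h3, h2]
    linarith

lemma card_l1ball (ι : Type) [Fintype ι] [DecidableEq ι] (M : ℕ) :
    (((Fintype.piFinset (fun _ : ι => Finset.Icc (-(M:ℤ)) (M:ℤ))).filter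
      (fun w => ∑ i, |w i| ≤ (M:ℤ))).card : ℝ) ≤ 2^M * 3^(Fintype.card ι) := by
  classical
  set Box := Fintype.piFinset (fun _ : ι => Finset.Icc (-(M:ℤ)) (M:ℤ)) with hBox
  set B := Box.filter (fun w => ∑ i, |w i| ≤ (M:ℤ)) with hB
  have step1 : (B.card : ℝ) ≤ ∑ w ∈ B, (2:ℝ) ^ ((M:ℤ) - ∑ i, |w i|) := by
    rw [Finset.card_eq_sum_ones, Nat.cast_sum]
    apply Finset.sum_le_sum
    intro w hw
    have hw' : ∑ i, |w i| ≤ (M:ℤ) := (Finset.mem_filter.mp hw).2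
    calc ((1:ℕ):ℝ) = (2:ℝ)^(0:ℤ) := by norm_num
    _ ≤ (2:ℝ) ^ ((M:ℤ) - ∑ i, |w i|) := by
        apply zpow_le_zpow_right₀ one_le_two; omega
  have step2 : ∑ w ∈ B, (2:ℝ) ^ ((M:ℤ) - ∑ i, |w i|)
      ≤ ∑ w ∈ Box, (2:ℝ) ^ ((M:ℤ) - ∑ i, |w i|) := by
    apply Finset.sum_le_sum_of_subset_of_nonneg (Finset.filter_subset _ _)
    intro w _ _; positivity
  have step3 : ∑ w ∈ Box, (2:ℝ) ^ ((M:ℤ) - ∑ i, |w i|)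
      = 2^M * ∏ _i : ι, (∑ c ∈ Finset.Icc (-(M:ℤ)) (M:ℤ), (2:ℝ)^(-|c|)) := by
    have e : ∀ w : ι → ℤ, (2:ℝ) ^ ((M:ℤ) - ∑ i, |w i|) = 2^M * ∏ i : ι, (2:ℝ)^(-|w i|) := by
      intro w
      rw [sub_eq_add_neg, zpow_add₀ (by norm_num : (2:ℝ) ≠ 0), ← Finset.sum_neg_distrib,
        zpow_sum_eq, zpow_natCast]
    simp only [e]
    rw [← Finset.mul_sum, Finset.prod_univ_sum (fun _ => Finset.Icc (-(M:ℤ)) (M:ℤ))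
      (fun _i c => (2:ℝ)^(-|c|))]
  have step4 : ∏ _i : ι, (∑ c ∈ Finset.Icc (-(M:ℤ)) (M:ℤ), (2:ℝ)^(-|c|))
      ≤ ∏ _i : ι, (3:ℝ) := by
    apply Finset.prod_le_prod
    · intro i _; positivity
    · intro i _
      have := geom_abs_sum M
      have h2 : (0:ℝ) < (2:ℝ)^(-(M:ℤ)) := by positivity
      linarith
  calc (B.card : ℝ) ≤ ∑ w ∈ Box, (2:ℝ) ^ ((M:ℤ) - ∑ i, |w i|) := step1.trans step2
  _ = 2^M * ∏ _i : ι, (∑ c ∈ Finset.Icc (-(M:ℤ)) (M:ℤ), (2:ℝ)^(-|c|)) := step3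
  _ ≤ 2^M * ∏ _i : ι, (3:ℝ) := by
      apply mul_le_mul_of_nonneg_left step4 (by positivity)
  _ = 2^M * 3^(Fintype.card ι) := by rw [Finset.prod_const, Finset.card_univ]


lemma vol_ball_ge (d : ℕ) (hd : 1 ≤ d) :
    ((1 / Real.sqrt d) ^ d : ℝ)
      ≤ (volume (Metric.ball (0 : EuclideanSpace ℝ (Fin d)) 1)).toReal := by
  have hd0 : (0:ℝ) < d := by positivity
  have hsd : (0:ℝ) < Real.sqrt d := Real.sqrt_pos.mpr hd0
  set a : ℝ := 1 / Real.sqrt d with ha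
  have ha0 : 0 < a := by positivity
  set P : Set (EuclideanSpace ℝ (Fin d)) := {x | ∀ i, x i ∈ Set.Ico (0:ℝ) a} with hP
  have hvolP : volume P = ENNReal.ofReal (a ^ d) := by
    have hmp := EuclideanSpace.volume_preserving_symm_measurableEquiv_toLp (Fin d)
    have : P = (MeasurableEquiv.toLp 2 (Fin d → ℝ)).symm ⁻¹' (Set.univ.pi fun _ : Fin d => Set.Ico (0:ℝ) a) := by
      ext x
      simp [hP, Set.mem_pi]
    rw [this, hmp.measure_preimage
      ((MeasurableSet.univ_pi (fun _ => measurableSet_Ico)).nullMeasurableSet), volume_pi_pi]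
    simp [Real.volume_Ico, Finset.prod_const, ENNReal.ofReal_pow ha0.le]
  have hsub : P ⊆ Metric.ball 0 1 := by
    intro x hx
    rw [Metric.mem_ball, dist_zero_right, EuclideanSpace.norm_eq]
    have hlt : ∑ i, ‖x i‖ ^ 2 < 1 := by
      have : ∀ i : Fin d, ‖x i‖^2 < 1 / d := by
        intro i
        obtain ⟨h1, h2⟩ := hx i
        have : ‖x i‖ < a := by rw [Real.norm_eq_abs, abs_of_nonneg h1]; exact h2
        have h3 : ‖x i‖^2 < a^2 := by
          apply sq_lt_sq' _ this
          linarith [norm_nonneg (x i)]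
        have : a^2 = 1/d := by
          rw [ha, div_pow, one_pow, Real.sq_sqrt hd0.le]
        linarith
      calc ∑ i, ‖x i‖ ^ 2 < ∑ _i : Fin d, (1/(d:ℝ)) := by
            apply Finset.sum_lt_sum_of_nonempty
            · exact Finset.univ_nonempty_iff.mpr (by
                have : 0 < d := hd
                exact Fin.pos_iff_nonempty.mp this)
            · intro i _; exact this i
      _ = 1 := by
            rw [Finset.sum_const, Finset.card_univ, Fintype.card_fin, nsmul_eq_mul]
            field_simp
    rw [show (1:ℝ) = Real.sqrt 1 by simp]
    exact Real.sqrt_lt_sqrt (by positivity) hlt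
  have hmono := measure_mono (μ := (volume : Measure (EuclideanSpace ℝ (Fin d)))) hsub
  rw [hvolP] at hmono
  have hfin : volume (Metric.ball (0 : EuclideanSpace ℝ (Fin d)) 1) < ⊤ :=
    measure_ball_lt_top (μ := (volume : Measure (EuclideanSpace ℝ (Fin d)))) (x := 0) (r := 1)
  calc (a ^ d : ℝ) = (ENNReal.ofReal (a^d)).toReal := by
        rw [ENNReal.toReal_ofReal (by positivity)]
  _ ≤ _ := ENNReal.toReal_mono hfin.ne hmono

def vtx {d : ℕ} (f : PolyLine d) (j : ℕ) : EuclideanSpace ℝ (Fin d) :=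
  if h : j < f.segs + 1 then f.vertices ⟨j, h⟩ else 0

def enc (d k : ℕ) (δ : ℝ) (f : PolyLine d) : (Fin d → ℤ) × (Fin k × Fin d → ℤ) :=
  (fun i => ⌊vtx f 0 i / δ⌋,
   fun ji => ⌊(vtx f (ji.1.1 + 1) ji.2 - vtx f ji.1.1 ji.2) / δ⌋)

lemma floor_grid_mul {δ : ℝ} (hδ : 0 < δ) {x : ℝ} (hx : ∃ n : ℤ, x = n * δ) :
    (⌊x / δ⌋ : ℝ) * δ = x := by
  obtain ⟨n, rfl⟩ := hx
  rw [mul_div_assoc, div_self hδ.ne', mul_one, Int.floor_intCast]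

lemma grid_sub {δ x y : ℝ} (hx : ∃ n : ℤ, x = n * δ) (hy : ∃ n : ℤ, y = n * δ) :
    ∃ n : ℤ, x - y = n * δ := by
  obtain ⟨n, rfl⟩ := hx; obtain ⟨m, rfl⟩ := hy
  exact ⟨n - m, by push_cast; ring⟩

lemma vtx_eq {d : ℕ} (f : PolyLine d) (j : ℕ) (h : j < f.segs + 1) :
    vtx f j = f.vertices ⟨j, h⟩ := dif_pos h

lemma vtx_mem {d : ℕ} {R δ L : ℝ} {k : ℕ} {f : PolyLine d}
    (hf : f ∈ Fclass d R δ L k) {j : ℕ} (hj : j ≤ k) :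
    vtx f j ∈ Qgrid d R δ := by
  obtain ⟨hseg, hQ, -⟩ := hf
  rw [vtx_eq f j (by omega)]
  exact hQ _

-- injectivity of enc on Fclass
lemma enc_injOn (d k : ℕ) (hk : 1 ≤ k) (R δ L : ℝ) (hδ : 0 < δ) :
    Set.InjOn (enc d k δ) (Fclass d R δ L k) := by
  intro f hf g hg h
  have hval : ∀ j, j ≤ k → ∀ i : Fin d, vtx f j i = vtx g j i := by
    intro j
    induction j with
    | zero =>
      intro _ i
      have h1 := congrFun (congrArg Prod.fst h) i
      have hfg : (⌊vtx f 0 i / δ⌋ : ℝ) = ⌊vtx g 0 i / δ⌋ := by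
        simp only [enc] at h1; exact_mod_cast congrArg Int.cast h1
      have e1 := floor_grid_mul hδ ((vtx_mem hf (Nat.zero_le k)).2 i)
      have e2 := floor_grid_mul hδ ((vtx_mem hg (Nat.zero_le k)).2 i)
      rw [← e1, ← e2, hfg]
    | succ j ih =>
      intro hj i
      have hj' : j ≤ k := by omega
      have hjk : j < k := by omega
      have h2 := congrFun (congrArg Prod.snd h) (⟨j, hjk⟩, i)
      simp only [enc] at h2
      have e1 := floor_grid_mul hδ
        (grid_sub ((vtx_mem hf hj).2 i) ((vtx_mem hf hj').2 i))
      have e2 := floor_grid_mul hδ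
        (grid_sub ((vtx_mem hg hj).2 i) ((vtx_mem hg hj').2 i))
      have hfl : (⌊(vtx f (j+1) i - vtx f j i) / δ⌋ : ℝ)
          = ⌊(vtx g (j+1) i - vtx g j i) / δ⌋ := by exact_mod_cast congrArg Int.cast h2
      have : vtx f (j+1) i = vtx f j i + (⌊(vtx f (j+1) i - vtx f j i) / δ⌋ : ℝ) * δ := by
        rw [e1]; ring
      rw [this, hfl, ih hj', e2]
      ring
  -- conclude f = g
  obtain ⟨sf, vf⟩ := f
  obtain ⟨sg, vg⟩ := g
  have hsf : sf = k := hf.1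
  have hsg : sg = k := hg.1
  subst hsf; subst hsg
  simp only [PolyLine.mk.injEq, heq_eq_eq, true_and]
  funext jj
  have e1 : vtx (PolyLine.mk _ vf) jj.1 = vf jj := by
    rw [vtx_eq _ jj.1 jj.2]
  have e2 : vtx (PolyLine.mk _ vg) jj.1 = vg jj := by
    rw [vtx_eq _ jj.1 jj.2]
  ext i
  have := hval jj.1 (Nat.lt_succ_iff.mp jj.2) i
  rw [e1, e2] at this
  exact this

lemma coord_abs_le_dist {d : ℕ} (x y : EuclideanSpace ℝ (Fin d)) (i : Fin d) :
    |x i - y i| ≤ dist x y := by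
  rw [EuclideanSpace.dist_eq]
  rw [show |x i - y i| = Real.sqrt ((x i - y i)^2) from (Real.sqrt_sq_eq_abs _).symm]
  apply Real.sqrt_le_sqrt
  calc (x i - y i)^2 = dist (x i) (y i) ^2 := by rw [Real.dist_eq, sq_abs]
  _ ≤ ∑ j, dist (x j) (y j)^2 := Finset.single_le_sum
      (f := fun j => dist (x j) (y j)^2) (fun j _ => sq_nonneg _) (Finset.mem_univ i)

lemma l1_le_sqrt_mul_dist {d : ℕ} (x y : EuclideanSpace ℝ (Fin d)) :
    ∑ i, |x i - y i| ≤ Real.sqrt d * dist x y := by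
  have h1 : (∑ i, |x i - y i|)^2 ≤ (d:ℝ) * (dist x y)^2 := by
    have := Finset.sum_mul_sq_le_sq_mul_sq Finset.univ (fun _ : Fin d => (1:ℝ))
      (fun i => |x i - y i|)
    simp only [one_mul, one_pow, Finset.sum_const, Finset.card_univ, Fintype.card_fin,
      nsmul_eq_mul, mul_one] at this
    refine this.trans ?_
    apply mul_le_mul_of_nonneg_left _ (by positivity)
    rw [EuclideanSpace.dist_eq, Real.sq_sqrt (by positivity)]
    apply Finset.sum_le_sum
    intro i _
    rw [sq_abs, Real.dist_eq, sq_abs]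
  calc ∑ i, |x i - y i| = Real.sqrt ((∑ i, |x i - y i|)^2) := by
        rw [Real.sqrt_sq (by positivity)]
  _ ≤ Real.sqrt ((d:ℝ) * (dist x y)^2) := Real.sqrt_le_sqrt h1
  _ = Real.sqrt d * dist x y := by
        rw [Real.sqrt_mul (by positivity), Real.sqrt_sq dist_nonneg]

lemma length_vtx {d : ℕ} {k : ℕ} {f : PolyLine d} (hseg : f.segs = k) :
    f.length = ∑ j ∈ Finset.range k, dist (vtx f j) (vtx f (j + 1)) := by
  subst hseg
  rw [PolyLine.length, ← Fin.sum_univ_eq_sum_range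
    (fun j => dist (vtx f j) (vtx f (j + 1)))]
  apply Finset.sum_congr rfl
  intro i _
  congr 1
  · rw [vtx_eq f i.1 (by omega)]; rfl
  · rw [vtx_eq f (i.1 + 1) (by omega)]; rfl

lemma enc_mem (d k : ℕ) (R δ L : ℝ) (hR : 0 < R) (hδ : 0 < δ) (hL : 0 < L)
    (f : PolyLine d) (hf : f ∈ Fclass d R δ L k) :
    enc d k δ f ∈
      (Fintype.piFinset (fun _ : Fin d =>
          Finset.Icc (-(⌊Real.sqrt d * R / δ⌋₊:ℤ)) (⌊Real.sqrt d * R / δ⌋₊:ℤ))) ×ˢ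
      ((Fintype.piFinset (fun _ : Fin k × Fin d =>
          Finset.Icc (-(⌊Real.sqrt d * L / δ⌋₊:ℤ)) (⌊Real.sqrt d * L / δ⌋₊:ℤ))).filter
        (fun w => ∑ i, |w i| ≤ (⌊Real.sqrt d * L / δ⌋₊:ℤ))) := by
  set N : ℕ := ⌊Real.sqrt d * R / δ⌋₊ with hN
  set M : ℕ := ⌊Real.sqrt d * L / δ⌋₊ with hM
  have hNfloor : ((N:ℤ):ℝ) = (⌊Real.sqrt d * R / δ⌋₊ : ℝ) := by norm_num [hN]
  rw [Finset.mem_product]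
  constructor
  · -- first coordinate
    rw [Fintype.mem_piFinset]
    intro i
    rw [Finset.mem_Icc, ← abs_le]
    have hmem := vtx_mem hf (Nat.zero_le k)
    have hx := hmem.1
    rw [Metric.mem_closedBall] at hx
    have hcoord : |vtx f 0 i| ≤ Real.sqrt d * R := by
      have h0 : (0 : EuclideanSpace ℝ (Fin d)) i = 0 := rfl
      calc |vtx f 0 i| = |vtx f 0 i - (0 : EuclideanSpace ℝ (Fin d)) i| := by rw [h0, sub_zero]
      _ ≤ dist (vtx f 0) 0 := coord_abs_le_dist _ _ i
      _ ≤ Real.sqrt d * R := hx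
    have he := floor_grid_mul hδ (hmem.2 i)
    have habs : ((|⌊vtx f 0 i / δ⌋| : ℤ) : ℝ) ≤ Real.sqrt d * R / δ := by
      rw [Int.cast_abs, le_div_iff₀ hδ]
      calc |(⌊vtx f 0 i / δ⌋:ℝ)| * δ = |(⌊vtx f 0 i / δ⌋:ℝ) * δ| := by
            rw [abs_mul, abs_of_pos hδ]
      _ = |vtx f 0 i| := by rw [he]
      _ ≤ Real.sqrt d * R := hcoord
    have : |⌊vtx f 0 i / δ⌋| ≤ ⌊Real.sqrt d * R / δ⌋ := Int.le_floor.mpr habs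
    simpa [hN, enc, Int.natCast_floor_eq_floor (by positivity : (0:ℝ) ≤ Real.sqrt d * R / δ)]
      using this
  · -- second coordinate
    have key : ∀ j : Fin k, ∀ i : Fin d,
        (|⌊(vtx f (j.1 + 1) i - vtx f j.1 i) / δ⌋| : ℝ) * δ
          = |vtx f (j.1 + 1) i - vtx f j.1 i| := by
      intro j i
      have he := floor_grid_mul hδ (grid_sub
        ((vtx_mem hf (by omega : j.1 + 1 ≤ k)).2 i) ((vtx_mem hf (by omega : j.1 ≤ k)).2 i))
      calc |((⌊(vtx f (j.1 + 1) i - vtx f j.1 i) / δ⌋ : ℤ):ℝ)| * δ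
          = |((⌊(vtx f (j.1 + 1) i - vtx f j.1 i) / δ⌋ : ℤ):ℝ) * δ| := by
            rw [abs_mul, abs_of_pos hδ]
      _ = |vtx f (j.1 + 1) i - vtx f j.1 i| := by rw [he]
    have hsum : (∑ ji : Fin k × Fin d,
        (|⌊(vtx f (ji.1.1 + 1) ji.2 - vtx f ji.1.1 ji.2) / δ⌋| : ℝ)) ≤ Real.sqrt d * L / δ := by
      rw [le_div_iff₀ hδ, Finset.sum_mul]
      calc ∑ ji : Fin k × Fin d, (|⌊(vtx f (ji.1.1 + 1) ji.2 - vtx f ji.1.1 ji.2) / δ⌋| : ℝ) * δ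
          = ∑ j : Fin k, ∑ i : Fin d, (|⌊(vtx f (j.1 + 1) i - vtx f j.1 i) / δ⌋| : ℝ) * δ := by
            rw [Fintype.sum_prod_type]
      _ = ∑ j : Fin k, ∑ i : Fin d, |vtx f (j.1 + 1) i - vtx f j.1 i| := by
            apply Finset.sum_congr rfl; intro j _; apply Finset.sum_congr rfl; intro i _
            exact key j i
      _ ≤ ∑ j : Fin k, Real.sqrt d * dist (vtx f (j.1+1)) (vtx f j.1) := by
            apply Finset.sum_le_sum; intro j _
            exact l1_le_sqrt_mul_dist (vtx f (j.1+1)) (vtx f j.1)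
      _ = Real.sqrt d * ∑ j ∈ Finset.range k, dist (vtx f j) (vtx f (j+1)) := by
            rw [Finset.mul_sum, ← Fin.sum_univ_eq_sum_range
              (fun j => Real.sqrt d * dist (vtx f j) (vtx f (j + 1)))]
            apply Finset.sum_congr rfl; intro j _
            rw [dist_comm]
      _ ≤ Real.sqrt d * L := by
            apply mul_le_mul_of_nonneg_left _ (by positivity)
            rw [← length_vtx hf.1]
            exact hf.2.2
    have hsumZ : ∑ ji : Fin k × Fin d,
        |⌊(vtx f (ji.1.1 + 1) ji.2 - vtx f ji.1.1 ji.2) / δ⌋| ≤ (M : ℤ) := by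
      rw [hM, Int.natCast_floor_eq_floor (by positivity : (0:ℝ) ≤ Real.sqrt d * L / δ)]
      apply Int.le_floor.mpr
      push_cast
      exact_mod_cast hsum
    rw [Finset.mem_filter]
    refine ⟨?_, hsumZ⟩
    rw [Fintype.mem_piFinset]
    intro ji
    rw [Finset.mem_Icc, ← abs_le]
    calc |⌊(vtx f (ji.1.1 + 1) ji.2 - vtx f ji.1.1 ji.2) / δ⌋|
        ≤ ∑ ji' : Fin k × Fin d, |⌊(vtx f (ji'.1.1 + 1) ji'.2 - vtx f ji'.1.1 ji'.2) / δ⌋| :=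
          Finset.single_le_sum
            (f := fun ji' : Fin k × Fin d =>
              |⌊(vtx f (ji'.1.1 + 1) ji'.2 - vtx f ji'.1.1 ji'.2) / δ⌋|)
            (fun _ _ => abs_nonneg _) (Finset.mem_univ ji)
    _ ≤ (M:ℤ) := hsumZ

lemma rpow_three_halves (d : ℕ) (hd : 1 ≤ d) :
    (d:ℝ) ^ ((3:ℝ)/2) = d * Real.sqrt d := by
  have hd0 : (0:ℝ) < d := by positivity
  rw [show (3:ℝ)/2 = 1 + 1/2 by ring, Real.rpow_add hd0, Real.rpow_one,
    Real.sqrt_eq_rpow]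

lemma dlog3_le_c1 (d p : ℕ) (hd : 1 ≤ d) (hp : 1 ≤ p) :
    (d:ℝ) * Real.log 3 ≤ c1 d p := by
  have hd0 : (0:ℝ) < d := by positivity
  have hsd : 1 ≤ Real.sqrt d := Real.one_le_sqrt.mpr (by exact_mod_cast hd)
  have hsd0 : (0:ℝ) < Real.sqrt d := by linarith
  have hV := vol_ball_ge d hd
  have hVpos : 0 < unitBallVol d := lt_of_lt_of_le (by positivity) hV
  have hp1 : (1:ℝ) ≤ (p:ℝ) := by exact_mod_cast hp
  -- log decomposition
  have hsplit : Real.log (8 * p * Real.exp 1 * unitBallVol d)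
      = Real.log (8 * p) + 1 + Real.log (unitBallVol d) := by
    rw [Real.log_mul (by positivity) hVpos.ne', Real.log_mul (by positivity)
      (Real.exp_ne_zero 1), Real.log_exp]
  have hlog8p : 0 ≤ Real.log (8 * (p:ℝ)) := Real.log_nonneg (by linarith)
  have hlogV : -((d:ℝ) * Real.log (Real.sqrt d)) ≤ Real.log (unitBallVol d) := by
    have := Real.log_le_log (by positivity : (0:ℝ) < (1/Real.sqrt d)^d) hV
    rw [Real.log_pow, Real.log_div one_ne_zero hsd0.ne', Real.log_one] at this
    have e : ((d:ℕ):ℝ) * (0 - Real.log (Real.sqrt d)) = -((d:ℝ) * Real.log (Real.sqrt d)) := by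
      ring
    rw [← e]
    simpa [unitBallVol] using this
  have hlog3 : Real.log 3 ≤ 2 := by
    rw [Real.log_le_iff_le_exp (by norm_num)]
    have := Real.add_one_le_exp 2
    linarith
  have hlogsd : Real.log (Real.sqrt d) ≤ Real.sqrt d - 1 :=
    Real.log_le_sub_one_of_pos hsd0
  have hsq : Real.sqrt d * Real.sqrt d = d := Real.mul_self_sqrt hd0.le
  rw [SLPC.c1, hsplit, rpow_three_halves d hd]
  have h1 : (d:ℝ) * Real.log 3 ≤ 2 * d := by
    have := mul_le_mul_of_nonneg_left hlog3 hd0.le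
    linarith
  have h2 : (d:ℝ) * Real.log (Real.sqrt d) ≤ d * (Real.sqrt d - 1) :=
    mul_le_mul_of_nonneg_left hlogsd hd0.le
  have h3 : (d:ℝ) ≤ (d:ℝ) * Real.sqrt d := by nlinarith
  nlinarith

/-- **Lemma 3.** Control of the cardinality of the set of polygonal lines of `F_p`
having exactly `k` segments: `ln |{f ∈ F_p : K(f) = k}| ≤ c₁k + c₂L + c₃`. -/
theorem lemma3
    (d p : ℕ) (hd : 1 ≤ d) (hp : 1 ≤ p)
    (R δ L : ℝ) (hR : 0 < R) (hδ : 0 < δ) (hL : 0 < L) :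
    ∀ k ∈ Finset.Icc 1 p,
      Real.log (({f ∈ Fp d p R δ L | f.segs = k} : Set (PolyLine d)).ncard)
        ≤ c1 d p * k + c2 d δ * L + c3 d R δ := by
  intro k hk
  obtain ⟨hk1, hkp⟩ := Finset.mem_Icc.mp hk
  have hd0 : (0:ℝ) < d := by positivity
  have hsd : 1 ≤ Real.sqrt d := Real.one_le_sqrt.mpr (by exact_mod_cast hd)
  have hsd0 : (0:ℝ) < Real.sqrt d := by linarith
  have hsq : Real.sqrt d * Real.sqrt d = (d:ℝ) := Real.mul_self_sqrt hd0.le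
  -- the set is Fclass
  have hSeq : {f ∈ Fp d p R δ L | f.segs = k} = Fclass d R δ L k := by
    ext f
    simp only [Set.mem_setOf_eq, Fp, Set.mem_iUnion, exists_prop]
    constructor
    · rintro ⟨⟨k', hk', hf⟩, hfk⟩
      have : k' = k := by rw [← hf.1, hfk]
      rwa [this] at hf
    · intro hf
      exact ⟨⟨k, hk, hf⟩, hf.1⟩
  rw [hSeq]
  set N : ℕ := ⌊Real.sqrt d * R / δ⌋₊ with hN
  set M : ℕ := ⌊Real.sqrt d * L / δ⌋₊ with hM
  set A : Finset (Fin d → ℤ) :=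
    Fintype.piFinset (fun _ : Fin d => Finset.Icc (-(N:ℤ)) (N:ℤ)) with hA
  set B : Finset (Fin k × Fin d → ℤ) :=
    (Fintype.piFinset (fun _ : Fin k × Fin d => Finset.Icc (-(M:ℤ)) (M:ℤ))).filter
      (fun w => ∑ i, |w i| ≤ (M:ℤ)) with hB
  have hinj := enc_injOn d k hk1 R δ L hδ
  have himg : enc d k δ '' Fclass d R δ L k ⊆ ↑(A ×ˢ B) := by
    rintro _ ⟨f, hf, rfl⟩
    exact_mod_cast enc_mem d k R δ L hR hδ hL f hf
  have hcard : (Fclass d R δ L k).ncard ≤ (A ×ˢ B).card := by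
    rw [← Set.ncard_image_of_injOn hinj, ← Set.ncard_coe_finset]
    exact Set.ncard_le_ncard himg (Finset.finite_toSet _)
  have hIccCard : (Finset.Icc (-(N:ℤ)) (N:ℤ)).card = 2*N+1 := by
    rw [Int.card_Icc]; omega
  have hAcard : (A.card : ℝ) = ((2*N+1:ℕ):ℝ)^d := by
    rw [hA, Fintype.card_piFinset]
    simp only [hIccCard]
    rw [Finset.prod_const, Finset.card_univ, Fintype.card_fin]
    push_cast; ring
  have hBcard : (B.card : ℝ) ≤ 2^M * 3^(k*d) := by
    have := card_l1ball (Fin k × Fin d) M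
    rwa [Fintype.card_prod, Fintype.card_fin, Fintype.card_fin] at this
  have hreal : ((Fclass d R δ L k).ncard : ℝ) ≤ ((2*N+1:ℕ):ℝ)^d * (2^M * 3^(k*d)) := by
    calc ((Fclass d R δ L k).ncard : ℝ) ≤ ((A ×ˢ B).card : ℝ) := by exact_mod_cast hcard
    _ = (A.card : ℝ) * (B.card : ℝ) := by rw [Finset.card_product]; push_cast; ring
    _ ≤ ((2*N+1:ℕ):ℝ)^d * (2^M * 3^(k*d)) := by
        rw [hAcard]
        apply mul_le_mul_of_nonneg_left hBcard (by positivity)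
  -- bound the three pieces
  have h2N1 : (1:ℝ) ≤ ((2*N+1:ℕ):ℝ) := by exact_mod_cast Nat.succ_le_succ (Nat.zero_le _)
  have hlog2 : (0:ℝ) ≤ Real.log 2 := Real.log_nonneg one_le_two
  have hlog3 : (0:ℝ) ≤ Real.log 3 := Real.log_nonneg (by norm_num)
  have hlog21 : Real.log 2 ≤ 1 := by
    have := Real.log_le_sub_one_of_pos (by norm_num : (0:ℝ) < 2); linarith
  have hpiece1 : (d:ℝ) * Real.log ((2*N+1:ℕ):ℝ) ≤ c3 d R δ := by
    rw [c3]
    apply mul_le_mul_of_nonneg_left _ hd0.le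
    apply Real.log_le_log (by linarith)
    have hNle : (N:ℝ) ≤ Real.sqrt d * R / δ := Nat.floor_le (by positivity)
    have harg : Real.sqrt d * (2 * R + δ) / δ = 2 * (Real.sqrt d * R / δ) + Real.sqrt d := by
      field_simp
    rw [harg]
    push_cast
    linarith
  have hpiece2 : (M:ℝ) * Real.log 2 ≤ c2 d δ * L := by
    have hMle : (M:ℝ) ≤ Real.sqrt d * L / δ := Nat.floor_le (by positivity)
    have h1 : (M:ℝ) * Real.log 2 ≤ (Real.sqrt d * L / δ) * 1 := by
      calc (M:ℝ) * Real.log 2 ≤ (Real.sqrt d * L / δ) * Real.log 2 :=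
            mul_le_mul_of_nonneg_right hMle hlog2
      _ ≤ (Real.sqrt d * L / δ) * 1 :=
            mul_le_mul_of_nonneg_left hlog21 (by positivity)
    have h2 : Real.sqrt d * L / δ ≤ (d:ℝ) * L / δ := by
      apply div_le_div_of_nonneg_right _ hδ.le
      have : Real.sqrt d ≤ (d:ℝ) := by nlinarith
      nlinarith
    have h3 : (0:ℝ) ≤ Real.log 2 / (δ * Real.sqrt d) * L := by positivity
    rw [c2]
    rw [mul_one] at h1
    calc (M:ℝ) * Real.log 2 ≤ (d:ℝ) * L / δ := by linarith
    _ ≤ (Real.log 2 / (δ * Real.sqrt d) + (d:ℝ)/δ) * L := by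
        rw [add_mul]
        have : (d:ℝ)/δ * L = (d:ℝ) * L / δ := by ring
        linarith [h3, this.ge]
  have hpiece3 : ((k*d:ℕ):ℝ) * Real.log 3 ≤ c1 d p * k := by
    push_cast
    calc (k:ℝ) * (d:ℝ) * Real.log 3 = (k:ℝ) * ((d:ℝ) * Real.log 3) := by ring
    _ ≤ (k:ℝ) * c1 d p := by
        apply mul_le_mul_of_nonneg_left (dlog3_le_c1 d p hd hp) (by positivity)
    _ = c1 d p * k := by ring
  -- RHS nonneg (for empty case)
  have hc1 : 0 ≤ c1 d p := le_trans (by positivity) (dlog3_le_c1 d p hd hp)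
  have hRHS : 0 ≤ c1 d p * k + c2 d δ * L + c3 d R δ := by
    have h3 : 0 ≤ c3 d R δ := by
      rw [c3]
      apply mul_nonneg hd0.le
      apply Real.log_nonneg
      rw [le_div_iff₀ hδ]
      nlinarith
    have h2 : 0 ≤ c2 d δ * L := by
      apply mul_nonneg _ hL.le
      rw [c2]; positivity
    have h1 : 0 ≤ c1 d p * k := mul_nonneg hc1 (by positivity)
    linarith
  rcases Nat.eq_zero_or_pos (Fclass d R δ L k).ncard with h0 | hpos
  · rw [h0]
    simpa using hRHS
  · have hposR : (0:ℝ) < ((Fclass d R δ L k).ncard : ℝ) := by exact_mod_cast hpos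
    calc Real.log ((Fclass d R δ L k).ncard : ℝ)
        ≤ Real.log (((2*N+1:ℕ):ℝ)^d * (2^M * 3^(k*d))) := Real.log_le_log hposR hreal
    _ = (d:ℝ) * Real.log ((2*N+1:ℕ):ℝ) + ((M:ℝ) * Real.log 2 + ((k*d:ℕ):ℝ) * Real.log 3) := by
        rw [Real.log_mul (by positivity) (by positivity),
          Real.log_mul (by positivity) (by positivity),
          Real.log_pow, Real.log_pow, Real.log_pow]
    _ ≤ c3 d R δ + (c2 d δ * L + c1 d p * k) := by
        apply add_le_add hpiece1 (add_le_add hpiece2 hpiece3)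
    _ = c1 d p * k + c2 d δ * L + c3 d R δ := by ring

end SLPC
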